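/- Let B be a Boolean algebra, S a finite subset of B closed under meet ⊓ and containing ⊤, and □ : B → B a map satisfying the modal axioms (m.i) and (m.ii). Then the basic propositional assignments are pairwise exclusive: for all φ, ψ ∈ S with φ ≠ ψ, φ^□ ⊓ ψ^□ = ⊥. -/
import Mathlib


open scoped Classical in
/-- The basic propositional assignment (bpa) of `φ`:
`φ^□ = □φ ⊓ (⊔_{ψ ∈ S, ψ < φ} □ψ)ᶜ`. -/
noncomputable def bpa {B : Type*} [BooleanAlgebra B]
    (S : Finset B) (box : B → B) (φ : B) : B :=
  box φ ⊓ ((S.filter fun ψ => ψ < φ).sup box)ᶜ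

lemma box_mono' {B : Type*} [BooleanAlgebra B] (box : B → B)
    (mi : box ⊤ = ⊤)
    (mii : ∀ x y : B, box (xᶜ ⊔ y) ≤ (box x)ᶜ ⊔ box y)
    {x y : B} (h : x ≤ y) : box x ≤ box y := by
  have h1 : xᶜ ⊔ y = ⊤ := by
    rw [eq_top_iff]; calc (⊤ : B) = xᶜ ⊔ x := (compl_sup_eq_top).symm
    _ ≤ xᶜ ⊔ y := sup_le_sup_left h _
  have h2 : (⊤ : B) ≤ (box x)ᶜ ⊔ box y := by
    rw [← mi, ← h1]; exact mii x y
  have := inf_le_inf_left (box x) h2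
  simpa [inf_sup_left] using this

lemma box_inf_le {B : Type*} [BooleanAlgebra B] (box : B → B)
    (mi : box ⊤ = ⊤)
    (mii : ∀ x y : B, box (xᶜ ⊔ y) ≤ (box x)ᶜ ⊔ box y)
    (x y : B) : box x ⊓ box y ≤ box (x ⊓ y) := by
  have hx : x ≤ yᶜ ⊔ (x ⊓ y) := by
    rw [sup_inf_left]
    simp [le_sup_right]
  have h1 : box x ≤ (box y)ᶜ ⊔ box (x ⊓ y) :=
    (box_mono' box mi mii hx).trans (mii y (x ⊓ y))
  have := inf_le_inf_right (box y) h1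
  calc box x ⊓ box y ≤ ((box y)ᶜ ⊔ box (x ⊓ y)) ⊓ box y := this
  _ ≤ box (x ⊓ y) := by
      rw [inf_sup_right]; simp [inf_comm]

open scoped Classical in
lemma bpa_exclusive_aux {B : Type*} [BooleanAlgebra B]
    (S : Finset B)
    (box : B → B)
    (mi : box ⊤ = ⊤)
    (mii : ∀ x y : B, box (xᶜ ⊔ y) ≤ (box x)ᶜ ⊔ box y)
    {φ ψ : B} (hmem : φ ⊓ ψ ∈ S) (hlt : φ ⊓ ψ < φ) :
    bpa S box φ ⊓ bpa S box ψ = ⊥ := by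
  have hsup : box (φ ⊓ ψ) ≤ (S.filter fun χ => χ < φ).sup box :=
    Finset.le_sup (by simp [Finset.mem_filter, hmem, hlt])
  have h1 : bpa S box φ ⊓ bpa S box ψ ≤ box (φ ⊓ ψ) := by
    refine le_trans (inf_le_inf inf_le_left inf_le_left) ?_
    exact box_inf_le box mi mii φ ψ
  have h2 : bpa S box φ ⊓ bpa S box ψ ≤ (box (φ ⊓ ψ))ᶜ := by
    refine le_trans inf_le_left (le_trans inf_le_right (compl_le_compl hsup))
  rw [eq_bot_iff]
  calc bpa S box φ ⊓ bpa S box ψ ≤ box (φ ⊓ ψ) ⊓ (box (φ ⊓ ψ))ᶜ := le_inf h1 h2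
  _ = ⊥ := inf_compl_eq_bot

/-- The basic propositional assignments are pairwise exclusive. -/
theorem bpa_exclusive {B : Type*} [BooleanAlgebra B]
    (S : Finset B)
    (hmeet : ∀ x ∈ S, ∀ y ∈ S, x ⊓ y ∈ S)
    (htop : ⊤ ∈ S)
    (box : B → B)
    (mi : box ⊤ = ⊤)
    (mii : ∀ x y : B, box (xᶜ ⊔ y) ≤ (box x)ᶜ ⊔ box y) :
    ∀ φ ∈ S, ∀ ψ ∈ S, φ ≠ ψ → bpa S box φ ⊓ bpa S box ψ = ⊥ := by
  intro φ hφ ψ hψ hne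
  have hmem : φ ⊓ ψ ∈ S := hmeet φ hφ ψ hψ
  by_cases h : φ ⊓ ψ = φ
  · have h2 : φ ⊓ ψ < ψ := lt_of_le_of_ne inf_le_right (fun he => hne (by rw [← h, he]))
    have := bpa_exclusive_aux S box mi mii (by rwa [inf_comm]) (by rwa [inf_comm])
    rw [inf_comm] at this; exact this
  · exact bpa_exclusive_aux S box mi mii hmem (lt_of_le_of_ne inf_le_left h)
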